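/- Conversely, if ρ ∈ A(μ) and λ ∈ ℝ satisfy the Thomas–Fermi equation (5/3) c_TF ρ(x)^{2/3} = max(0, λ − Φ_{ρ−μ}(x)) for almost every x ∈ ℝ, then ρ is a minimizer of E^TF over A(μ), i.e. E^TF(ρ) ≤ E^TF(σ) for all σ ∈ A(μ). -/

import Mathlib

open MeasureTheory Real Set Filter Topology ENNReal

/-- The primitive `W_f(x) = ∫_{-∞}^x f(y) dy`. -/
noncomputable def W (f : ℝ → ℝ) (x : ℝ) : ℝ := ∫ y in Set.Iic x, f y

/-- The mean-field potential `Φ_f(x) = -4π ∫_0^x W_f(y) dy`. -/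
noncomputable def Phi (f : ℝ → ℝ) (x : ℝ) : ℝ := -4 * π * ∫ y in (0:ℝ)..x, W f y

/-- The three-dimensional Thomas–Fermi constant. -/
noncomputable def cTF : ℝ := (3 / 10) * (3 * π ^ 2) ^ ((2 : ℝ) / 3)

/-- The admissible set `A(μ)` of the reduced Thomas–Fermi problem. -/
def Adm (μ ρ : ℝ → ℝ) : Prop :=
  Integrable ρ ∧ MemLp ρ (5/3) volume ∧ (∀ᵐ x, 0 ≤ ρ x) ∧
    MemLp (W (fun y => ρ y - μ y)) 2 volume ∧ (∫ x, ρ x) = ∫ x, μ x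

/-- The reduced one-dimensional Thomas–Fermi energy. -/
noncomputable def Etf (μ ρ : ℝ → ℝ) : ℝ :=
  cTF * (∫ x, ρ x ^ ((5 : ℝ) / 3)) + 2 * π * ∫ x, (W (fun y => ρ y - μ y) x) ^ 2

/-! ### Auxiliary lemmas -/

section WBasics

lemma TF9.W_eq {f : ℝ → ℝ} (hf : Integrable f) (x : ℝ) :
    W f x = W f 0 + ∫ t in (0:ℝ)..x, f t := by
  rw [← intervalIntegral.integral_Iic_sub_Iic hf.integrableOn hf.integrableOn]
  unfold W; ring

lemma TF9.W_cont {f : ℝ → ℝ} (hf : Integrable f) : Continuous (W f) := by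
  have : Continuous fun x => W f 0 + ∫ t in (0:ℝ)..x, f t :=
    continuous_const.add (hf.continuous_primitive 0)
  exact this.congr fun x => (TF9.W_eq hf x).symm

lemma TF9.W_sub {f g : ℝ → ℝ} (hf : Integrable f) (hg : Integrable g) (x : ℝ) :
    W (fun y => f y - g y) x = W f x - W g x := by
  unfold W
  exact integral_sub hf.integrableOn hg.integrableOn

lemma TF9.W_tendsto_top {f : ℝ → ℝ} (hf : Integrable f) :
    Tendsto (fun k : ℕ => W f k) atTop (𝓝 (∫ x, f x)) := by
  have h := MeasureTheory.tendsto_integral_of_dominated_convergence (fun x => |f x|)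
    (F := fun (k : ℕ) => (Set.Iic (k:ℝ)).indicator f) (f := f)
    (fun k => hf.aestronglyMeasurable.indicator measurableSet_Iic)
    hf.abs
    (fun k => Filter.Eventually.of_forall fun x => by
      rw [Real.norm_eq_abs]
      by_cases hx : x ∈ Set.Iic (k:ℝ) <;> simp [Set.indicator_apply, hx, abs_nonneg])
    (Filter.Eventually.of_forall fun x => by
      have : ∀ᶠ k : ℕ in atTop, x ≤ (k:ℝ) := by
        filter_upwards [eventually_ge_atTop ⌈x⌉₊] with k hk
        calc x ≤ (⌈x⌉₊ : ℝ) := Nat.le_ceil x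
        _ ≤ k := by exact_mod_cast hk
      refine Tendsto.congr' ?_ tendsto_const_nhds
      filter_upwards [this] with k hk
      simp [Set.indicator_apply, Set.mem_Iic, hk])
  refine h.congr fun k => ?_
  rw [integral_indicator measurableSet_Iic]; rfl

lemma TF9.W_tendsto_bot {f : ℝ → ℝ} (hf : Integrable f) :
    Tendsto (fun k : ℕ => W f (-(k:ℝ))) atTop (𝓝 (0:ℝ)) := by
  have h := MeasureTheory.tendsto_integral_of_dominated_convergence (fun x => |f x|)
    (F := fun (k : ℕ) => (Set.Iic (-(k:ℝ))).indicator f) (f := 0)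
    (fun k => hf.aestronglyMeasurable.indicator measurableSet_Iic)
    hf.abs
    (fun k => Filter.Eventually.of_forall fun x => by
      rw [Real.norm_eq_abs]
      by_cases hx : x ∈ Set.Iic (-(k:ℝ)) <;> simp [Set.indicator_apply, hx, abs_nonneg])
    (Filter.Eventually.of_forall fun x => by
      have : ∀ᶠ k : ℕ in atTop, ¬ (x ≤ -(k:ℝ)) := by
        filter_upwards [eventually_gt_atTop ⌈-x⌉₊] with k hk
        have h1 : (-x) ≤ (⌈-x⌉₊ : ℝ) := Nat.le_ceil _
        have h2 : ((⌈-x⌉₊:ℕ):ℝ) < (k:ℝ) := by exact_mod_cast hk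
        push_neg
        linarith
      refine Tendsto.congr' ?_ tendsto_const_nhds
      filter_upwards [this] with k hk
      simp [Set.indicator_apply, Set.mem_Iic, hk])
  simpa using h.congr fun k => by rw [integral_indicator measurableSet_Iic]; rfl

end WBasics

/-! ### The mollified step functions -/

noncomputable def TF9.Theta (φ : ℝ → ℝ) (t : ℝ) : ℝ := ∫ s in (0:ℝ)..t, φ s

namespace TF9

section theta
variable {φ : ℝ → ℝ} (hφc : Continuous φ) (h0 : ∀ s, 0 ≤ φ s) (h1 : ∀ s, φ s ≤ 1)

include hφc in
lemma Theta_hasDerivAt (t : ℝ) : HasDerivAt (Theta φ) (φ t) t :=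
  (hφc.integral_hasStrictDerivAt 0 t).hasDerivAt

include h0 in
lemma Theta_nonneg {t : ℝ} (ht : 0 ≤ t) : 0 ≤ Theta φ t :=
  intervalIntegral.integral_nonneg ht fun s _ => h0 s

include h0 in
lemma Theta_nonpos {t : ℝ} (ht : t ≤ 0) : Theta φ t ≤ 0 := by
  unfold Theta
  rw [intervalIntegral.integral_symm t 0]
  have : 0 ≤ ∫ s in t..(0:ℝ), φ s := intervalIntegral.integral_nonneg ht fun s _ => h0 s
  linarith

include hφc h0 h1 in
lemma Theta_le_max (t : ℝ) : Theta φ t ≤ max t 0 := by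
  rcases le_or_gt t 0 with ht | ht
  · exact le_trans (Theta_nonpos h0 ht) (le_max_right _ _)
  · refine le_trans ?_ (le_max_left _ _)
    calc Theta φ t ≤ ∫ s in (0:ℝ)..t, (1:ℝ) := by
          apply intervalIntegral.integral_mono_on ht.le
            (hφc.intervalIntegrable _ _) intervalIntegrable_const
          exact fun s _ => h1 s
      _ = t := by simp

include hφc h0 in
lemma Theta_integral_zero_of {c d : ℝ} (hcd : c ≤ d) (hz : ∀ s, c ≤ s → s ≤ d → φ s = 0) :
    ∫ s in c..d, φ s = 0 := by
  rw [intervalIntegral.integral_congr (g := fun _ => (0:ℝ))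
    (fun s hs => by
      rw [Set.uIcc_of_le hcd] at hs
      exact hz s hs.1 hs.2)]
  simp

include hφc h0 h1 in
lemma Theta_ge {ε : ℝ} (hε : 0 ≤ ε) (hneg : ∀ s, s ≤ -ε → φ s = 0) (t : ℝ) :
    -ε ≤ Theta φ t := by
  rcases le_or_gt 0 t with ht | ht
  · linarith [Theta_nonneg h0 ht]
  · unfold Theta
    rw [intervalIntegral.integral_symm t 0]
    rcases le_or_gt (-ε) t with h2 | h2
    · have : (∫ s in t..(0:ℝ), φ s) ≤ ∫ s in t..(0:ℝ), (1:ℝ) :=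
        intervalIntegral.integral_mono_on ht.le (hφc.intervalIntegrable _ _)
          intervalIntegrable_const (fun s _ => h1 s)
      simp only [intervalIntegral.integral_const, smul_eq_mul, mul_one] at this
      linarith
    · have hsplit : (∫ s in t..(-ε), φ s) + (∫ s in (-ε)..(0:ℝ), φ s) = ∫ s in t..(0:ℝ), φ s :=
        intervalIntegral.integral_add_adjacent_intervals
          (hφc.intervalIntegrable _ _) (hφc.intervalIntegrable _ _)
      have hz : (∫ s in t..(-ε), φ s) = 0 :=
        Theta_integral_zero_of hφc h0 h2.le fun s _ hs2 => hneg s hs2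
      have : (∫ s in (-ε)..(0:ℝ), φ s) ≤ ∫ s in (-ε)..(0:ℝ), (1:ℝ) :=
        intervalIntegral.integral_mono_on (by linarith) (hφc.intervalIntegrable _ _)
          intervalIntegrable_const (fun s _ => h1 s)
      simp only [intervalIntegral.integral_const, smul_eq_mul, mul_one] at this
      linarith

include hφc h0 h1 in
lemma Theta_abs_le {b : ℝ} (hb : 0 ≤ b) (hsupp : ∀ s, b ≤ s → φ s = 0)
    (hneg : ∀ s, s ≤ -1 → φ s = 0) (t : ℝ) : |Theta φ t| ≤ b + 1 := by
  rcases le_or_gt t b with ht | ht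
  · have h2 := Theta_le_max hφc h0 h1 t
    have h3 := Theta_ge hφc h0 h1 zero_le_one hneg t
    rw [abs_le]
    constructor
    · linarith
    · rcases le_or_gt t 0 with h4 | h4
      · have h2' : Theta φ t ≤ 0 := le_trans h2 (by simp [h4])
        linarith
      · have : max t 0 = t := max_eq_left h4.le
        rw [this] at h2; linarith
  · have hsplit : (∫ s in (0:ℝ)..b, φ s) + (∫ s in b..t, φ s) = ∫ s in (0:ℝ)..t, φ s :=
      intervalIntegral.integral_add_adjacent_intervals
        (hφc.intervalIntegrable _ _) (hφc.intervalIntegrable _ _)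
    have hz : (∫ s in b..t, φ s) = 0 :=
      Theta_integral_zero_of hφc h0 ht.le fun s hs _ => hsupp s hs
    have h1' : (∫ s in (0:ℝ)..b, φ s) ≤ max b 0 := Theta_le_max hφc h0 h1 b
    have h2' : (0:ℝ) ≤ ∫ s in (0:ℝ)..b, φ s := Theta_nonneg h0 hb
    have : Theta φ t = ∫ s in (0:ℝ)..b, φ s := by unfold Theta; rw [← hsplit, hz, add_zero]
    rw [this, abs_of_nonneg h2', max_eq_left hb] at *
    linarith

include h0 in
lemma Theta_zero_of_nonpos (hneg : ∀ s, s ≤ 0 → φ s = 0) {t : ℝ} (ht : t ≤ 0) :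
    Theta φ t = 0 := by
  unfold Theta
  rw [intervalIntegral.integral_symm t 0, intervalIntegral.integral_congr
    (g := fun _ => (0:ℝ)) (fun s hs => by
      rw [Set.uIcc_of_le ht] at hs
      exact hneg s hs.2)]
  simp

end theta

noncomputable def phiA (m : ℕ) (s : ℝ) : ℝ := max 0 (min (min ((m+1)*s) 1) ((m+2) - s))
noncomputable def phiB (m : ℕ) (s : ℝ) : ℝ := max 0 (min (min ((m+1)*s + 1) 1) ((m+2) - s))

lemma phiA_cont (m : ℕ) : Continuous (phiA m) := by
  unfold phiA; fun_prop

lemma phiB_cont (m : ℕ) : Continuous (phiB m) := by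
  unfold phiB; fun_prop

lemma phiA_nonneg (m : ℕ) (s : ℝ) : 0 ≤ phiA m s := le_max_left _ _
lemma phiB_nonneg (m : ℕ) (s : ℝ) : 0 ≤ phiB m s := le_max_left _ _

lemma phiA_le_one (m : ℕ) (s : ℝ) : phiA m s ≤ 1 := by
  unfold phiA
  apply max_le zero_le_one
  exact le_trans (min_le_left _ _) (min_le_right _ _)

lemma phiB_le_one (m : ℕ) (s : ℝ) : phiB m s ≤ 1 := by
  unfold phiB
  apply max_le zero_le_one
  exact le_trans (min_le_left _ _) (min_le_right _ _)

lemma phiA_zero_nonpos (m : ℕ) {s : ℝ} (hs : s ≤ 0) : phiA m s = 0 := by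
  unfold phiA
  apply max_eq_left
  refine le_trans (le_trans (min_le_left _ _) (min_le_left _ _)) ?_
  have : (0:ℝ) ≤ (m:ℝ)+1 := by positivity
  nlinarith

lemma phiB_zero_le (m : ℕ) {s : ℝ} (hs : s ≤ -(1/((m:ℝ)+1))) : phiB m s = 0 := by
  unfold phiB
  apply max_eq_left
  refine le_trans (le_trans (min_le_left _ _) (min_le_left _ _)) ?_
  have h1 : (0:ℝ) < (m:ℝ)+1 := by positivity
  have h2 : ((m:ℝ)+1) * s ≤ ((m:ℝ)+1) * (-(1/((m:ℝ)+1))) :=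
    mul_le_mul_of_nonneg_left hs h1.le
  have h3 : ((m:ℝ)+1) * (-(1/((m:ℝ)+1))) = -1 := by field_simp
  linarith

lemma phiA_zero_ge (m : ℕ) {s : ℝ} (hs : (m:ℝ)+2 ≤ s) : phiA m s = 0 := by
  unfold phiA
  apply max_eq_left
  refine le_trans (min_le_right _ _) (by linarith)

lemma phiB_zero_ge (m : ℕ) {s : ℝ} (hs : (m:ℝ)+2 ≤ s) : phiB m s = 0 := by
  unfold phiB
  apply max_eq_left
  refine le_trans (min_le_right _ _) (by linarith)

lemma phiA_tendsto (s : ℝ) :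
    Tendsto (fun m : ℕ => phiA m s) atTop (𝓝 (if 0 < s then (1:ℝ) else 0)) := by
  rcases lt_or_ge 0 s with hs | hs
  · rw [if_pos hs]
    refine Tendsto.congr' ?_ tendsto_const_nhds
    have h1 : ∀ᶠ m : ℕ in atTop, (1:ℝ) ≤ ((m:ℝ)+1) * s := by
      filter_upwards [eventually_ge_atTop ⌈1/s⌉₊] with m hm
      have h2 : 1/s ≤ (⌈1/s⌉₊:ℝ) := Nat.le_ceil _
      have h3 : ((⌈1/s⌉₊:ℕ):ℝ) ≤ (m:ℝ) := by exact_mod_cast hm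
      have : 1/s ≤ (m:ℝ)+1 := by linarith
      rw [div_le_iff₀ hs] at this
      linarith [this]
    have h2 : ∀ᶠ m : ℕ in atTop, (1:ℝ) ≤ ((m:ℝ)+2) - s := by
      filter_upwards [eventually_ge_atTop ⌈s⌉₊] with m hm
      have h2 : s ≤ (⌈s⌉₊:ℝ) := Nat.le_ceil _
      have h3 : ((⌈s⌉₊:ℕ):ℝ) ≤ (m:ℝ) := by exact_mod_cast hm
      linarith
    filter_upwards [h1, h2] with m hm1 hm2
    unfold phiA
    rw [min_eq_right hm1, min_eq_left hm2, max_eq_right zero_le_one]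
  · rw [if_neg (not_lt.2 hs)]
    refine Tendsto.congr' ?_ tendsto_const_nhds
    exact Eventually.of_forall fun m => (phiA_zero_nonpos m hs).symm

lemma phiB_tendsto (s : ℝ) :
    Tendsto (fun m : ℕ => phiB m s) atTop (𝓝 (if 0 ≤ s then (1:ℝ) else 0)) := by
  rcases le_or_gt 0 s with hs | hs
  · rw [if_pos hs]
    refine Tendsto.congr' ?_ tendsto_const_nhds
    have h1 : ∀ m : ℕ, (1:ℝ) ≤ ((m:ℝ)+1) * s + 1 := by
      intro m; have : (0:ℝ) ≤ ((m:ℝ)+1)*s := by positivity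
      linarith
    have h2 : ∀ᶠ m : ℕ in atTop, (1:ℝ) ≤ ((m:ℝ)+2) - s := by
      filter_upwards [eventually_ge_atTop ⌈s⌉₊] with m hm
      have h2 : s ≤ (⌈s⌉₊:ℝ) := Nat.le_ceil _
      have h3 : ((⌈s⌉₊:ℕ):ℝ) ≤ (m:ℝ) := by exact_mod_cast hm
      linarith
    filter_upwards [h2] with m hm2
    unfold phiB
    rw [min_eq_right (h1 m), min_eq_left hm2, max_eq_right zero_le_one]
  · rw [if_neg (not_le.2 hs)]
    refine Tendsto.congr' ?_ tendsto_const_nhds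
    have : ∀ᶠ m : ℕ in atTop, ((m:ℝ)+1) * s + 1 ≤ 0 := by
      filter_upwards [eventually_ge_atTop ⌈1/(-s)⌉₊] with m hm
      have h2 : 1/(-s) ≤ (⌈1/(-s)⌉₊:ℝ) := Nat.le_ceil _
      have h3 : ((⌈1/(-s)⌉₊:ℕ):ℝ) ≤ (m:ℝ) := by exact_mod_cast hm
      have h4 : 1/(-s) ≤ (m:ℝ)+1 := by linarith
      rw [div_le_iff₀ (by linarith : (0:ℝ) < -s)] at h4
      nlinarith
    filter_upwards [this] with m hm
    unfold phiB
    symm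
    apply max_eq_left
    exact le_trans (le_trans (min_le_left _ _) (min_le_left _ _)) hm

lemma ThetaA_tendsto (t : ℝ) :
    Tendsto (fun m : ℕ => Theta (phiA m) t) atTop (𝓝 (max t 0)) := by
  rcases le_or_gt t 0 with ht | ht
  · rw [max_eq_right ht]
    refine Tendsto.congr' ?_ tendsto_const_nhds
    exact Eventually.of_forall fun m =>
      (Theta_zero_of_nonpos (phiA_nonneg m) (fun s hs => phiA_zero_nonpos m hs) ht).symm
  · rw [max_eq_left ht.le]
    have heq : ∀ m : ℕ, Theta (phiA m) t = ∫ s in Ioc (0:ℝ) t, phiA m s := fun m => by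
      unfold Theta; rw [intervalIntegral.integral_of_le ht.le]
    have hlim : (∫ s in Ioc (0:ℝ) t, (1:ℝ)) = t := by
      simp [Real.volume_Ioc, ENNReal.toReal_ofReal ht.le, ht.le]
    have h := MeasureTheory.tendsto_integral_of_dominated_convergence
      (μ := volume.restrict (Ioc 0 t))
      (F := fun m : ℕ => phiA m) (f := fun _ => (1:ℝ)) (bound := fun _ => (1:ℝ))
      (fun m => (phiA_cont m).aestronglyMeasurable)
      (integrableOn_const measure_Ioc_lt_top.ne)
      (fun m => Eventually.of_forall fun s => by
        rw [Real.norm_eq_abs, abs_of_nonneg (phiA_nonneg m s)]; exact phiA_le_one m s)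
      (by
        rw [ae_restrict_iff' measurableSet_Ioc]
        exact Eventually.of_forall fun s hs => by
          simpa [if_pos hs.1] using phiA_tendsto s)
    rw [hlim] at h
    exact Tendsto.congr (fun m => (heq m).symm) h

end TF9

/-! ### Integration by parts -/

lemma TF9.ibp_finite {d U u : ℝ → ℝ} (hd : Integrable d)
    (hU : Continuous U) (hu : ∀ x, HasDerivAt u (U x) x)
    {C : ℝ} (huC : ∀ x, |u x| ≤ C)
    (a b : ℝ) (hab : a ≤ b) :
    ∫ x in Ioc a b, u x * d x
      = u b * W d b - u a * W d a - ∫ t in Ioc a b, U t * W d t := by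
  have hu_cont : Continuous u := by
    apply continuous_iff_continuousAt.2 fun x => (hu x).continuousAt
  have hWd_cont : Continuous (W d) := TF9.W_cont hd
  -- FTC
  have hftc : ∀ x, a ≤ x → (∫ t in Ioc a x, U t) = u x - u a := by
    intro x hx
    rw [← intervalIntegral.integral_of_le hx]
    exact intervalIntegral.integral_eq_sub_of_hasDerivAt (fun t _ => hu t)
      (hU.intervalIntegrable a x)
  have hIicint : ∀ c : ℝ, IntegrableOn d (Iic c) := fun c => hd.integrableOn
  have hdIoc : ∀ s t : ℝ, s ≤ t → (∫ x in Ioc s t, d x) = W d t - W d s := by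
    intro s t hst
    rw [← intervalIntegral.integral_of_le hst]
    exact (intervalIntegral.integral_Iic_sub_Iic (hIicint s) (hIicint t)).symm
  -- bound for U on Icc a b
  obtain ⟨CU, hCU⟩ : ∃ c, ∀ s ∈ Icc a b, |U s| ≤ c := by
    rcases (isCompact_Icc (a := a) (b := b)).exists_bound_of_continuousOn hU.continuousOn with
      ⟨c, hc⟩
    exact ⟨c, fun s hs => hc s hs⟩
  set CU' : ℝ := max CU 0 with hCU'
  have hCU'0 : 0 ≤ CU' := le_max_right _ _
  have hCU'b : ∀ s ∈ Icc a b, |U s| ≤ CU' := fun s hs => le_trans (hCU s hs) (le_max_left _ _)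
  -- the product set and function
  set T : Set (ℝ × ℝ) := {p | p.1 ∈ Ioc a b ∧ p.2 ∈ Ioc a p.1} with hT
  have hTm : MeasurableSet T := by
    have : T = ({p : ℝ × ℝ | a < p.1} ∩ {p | p.1 ≤ b}) ∩
        ({p : ℝ × ℝ | a < p.2} ∩ {p | p.2 ≤ p.1}) := by
      rfl
    rw [this]
    exact (((measurableSet_lt measurable_const measurable_fst).inter
      (measurableSet_le measurable_fst measurable_const)).inter
      ((measurableSet_lt measurable_const measurable_snd).inter
      (measurableSet_le measurable_snd measurable_fst)))
  set F : ℝ × ℝ → ℝ := T.indicator (fun p => d p.1 * U p.2) with hF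
  have hFm : AEStronglyMeasurable F (volume.prod volume) :=
    ((hd.aestronglyMeasurable.comp_fst).mul
      (hU.aestronglyMeasurable.comp_snd)).indicator hTm
  have hFi : Integrable F (volume.prod volume) := by
    have hGi : Integrable (fun p : ℝ × ℝ =>
        ((Ioc a b).indicator (fun x => |d x|) p.1) * ((Icc a b).indicator (fun _ => CU') p.2))
        (volume.prod volume) := by
      apply Integrable.mul_prod
      · exact hd.abs.indicator measurableSet_Ioc
      · exact (integrable_indicator_iff measurableSet_Icc).2
          (integrableOn_const measure_Icc_lt_top.ne)
    refine Integrable.mono' hGi hFm (Eventually.of_forall fun p => ?_)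
    rw [Real.norm_eq_abs]
    by_cases hp : p ∈ T
    · rw [hF, Set.indicator_of_mem hp]
      obtain ⟨hp1, hp2⟩ := hp
      have hp2' : p.2 ∈ Icc a b := ⟨hp2.1.le, le_trans hp2.2 hp1.2⟩
      rw [Set.indicator_of_mem hp1, Set.indicator_of_mem hp2', abs_mul]
      exact mul_le_mul_of_nonneg_left (hCU'b _ hp2') (abs_nonneg _)
    · rw [hF, Set.indicator_of_notMem hp, abs_zero]
      apply mul_nonneg <;> apply Set.indicator_nonneg <;> intro x _
      · exact abs_nonneg _
      · exact hCU'0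
  -- Fubini
  have hswap : (∫ x, ∫ t, F (x, t)) = ∫ t, ∫ x, F (x, t) :=
    MeasureTheory.integral_integral_swap (f := fun x t => F (x, t)) hFi
  -- LHS
  have hL1 : ∀ x, (∫ t, F (x, t)) = (Ioc a b).indicator (fun x => d x * (u x - u a)) x := by
    intro x
    by_cases hx : x ∈ Ioc a b
    · have hft : ∀ t, F (x, t) = (Ioc a x).indicator (fun t => d x * U t) t := by
        intro t
        by_cases ht : t ∈ Ioc a x
        · rw [Set.indicator_of_mem ht, hF, Set.indicator_of_mem (by exact ⟨hx, ht⟩)]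
        · rw [Set.indicator_of_notMem ht, hF, Set.indicator_of_notMem
            (fun hmem => ht hmem.2)]
      rw [Set.indicator_of_mem hx]
      calc (∫ t, F (x, t)) = ∫ t, (Ioc a x).indicator (fun t => d x * U t) t := by
            exact integral_congr_ae (Eventually.of_forall hft)
        _ = ∫ t in Ioc a x, d x * U t := integral_indicator measurableSet_Ioc
        _ = d x * ∫ t in Ioc a x, U t := integral_const_mul _ _
        _ = d x * (u x - u a) := by rw [hftc x hx.1.le]
    · rw [Set.indicator_of_notMem hx]
      have hft : ∀ t, F (x, t) = 0 := fun t =>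
        Set.indicator_of_notMem (fun hmem => hx hmem.1) _
      rw [integral_congr_ae (Eventually.of_forall hft), integral_zero]
  -- RHS
  have hR1 : ∀ t, (∫ x, F (x, t)) = (Ioc a b).indicator
      (fun t => U t * (W d b - W d t)) t := by
    intro t
    by_cases ht : t ∈ Ioc a b
    · have hfx : ∀ x, F (x, t) = (Icc t b).indicator (fun x => d x * U t) x := by
        intro x
        by_cases hx : x ∈ Icc t b
        · rw [Set.indicator_of_mem hx, hF, Set.indicator_of_mem]
          exact ⟨⟨lt_of_lt_of_le ht.1 hx.1, hx.2⟩, ⟨ht.1, hx.1⟩⟩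
        · rw [Set.indicator_of_notMem hx, hF, Set.indicator_of_notMem]
          intro hmem
          exact hx ⟨hmem.2.2, hmem.1.2⟩
      rw [Set.indicator_of_mem ht]
      calc (∫ x, F (x, t)) = ∫ x, (Icc t b).indicator (fun x => d x * U t) x :=
            integral_congr_ae (Eventually.of_forall hfx)
        _ = ∫ x in Icc t b, d x * U t := integral_indicator measurableSet_Icc
        _ = ∫ x in Ioc t b, d x * U t := integral_Icc_eq_integral_Ioc
        _ = (∫ x in Ioc t b, d x) * U t := integral_mul_const _ _
        _ = (W d b - W d t) * U t := by rw [hdIoc t b ht.2]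
        _ = U t * (W d b - W d t) := mul_comm _ _
    · rw [Set.indicator_of_notMem ht]
      have hfx : ∀ x, F (x, t) = 0 := by
        intro x
        apply Set.indicator_of_notMem
        intro hmem
        exact ht ⟨lt_of_lt_of_le hmem.2.1 (le_refl _) |>.trans_le hmem.2.2 |> fun h => hmem.2.1, by
          exact le_trans hmem.2.2 hmem.1.2⟩
      rw [integral_congr_ae (Eventually.of_forall hfx), integral_zero]
  -- compute both sides
  have hud_int : Integrable (fun x => u x * d x) := by
    refine hd.bdd_mul (c := C) hu_cont.aestronglyMeasurable (Eventually.of_forall fun x => ?_)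
    rw [Real.norm_eq_abs]; exact huC x
  have hLHS : (∫ x, ∫ t, F (x, t))
      = (∫ x in Ioc a b, u x * d x) - u a * (W d b - W d a) := by
    rw [integral_congr_ae (Eventually.of_forall hL1), integral_indicator measurableSet_Ioc]
    have : ∀ x, d x * (u x - u a) = u x * d x - u a * d x := fun x => by ring
    rw [setIntegral_congr_ae measurableSet_Ioc (Eventually.of_forall fun x _ => this x)]
    rw [integral_sub (hud_int.integrableOn) ((hd.const_mul (u a)).integrableOn)]
    rw [integral_const_mul, hdIoc a b hab]
  have hUWd_int_loc : IntegrableOn (fun t => U t * W d t) (Ioc a b) :=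
    ((hU.mul hWd_cont).integrableOn_Icc).mono_set Set.Ioc_subset_Icc_self
  have hRHS : (∫ t, ∫ x, F (x, t))
      = (u b - u a) * W d b - ∫ t in Ioc a b, U t * W d t := by
    rw [integral_congr_ae (Eventually.of_forall hR1), integral_indicator measurableSet_Ioc]
    have : ∀ t, U t * (W d b - W d t) = U t * W d b - U t * W d t := fun t => by ring
    rw [setIntegral_congr_ae measurableSet_Ioc (Eventually.of_forall fun t _ => this t)]
    rw [integral_sub (IntegrableOn.mono_set (t := Icc a b) ((hU.integrableOn_Icc (a := a) (b := b)).mul_const (W d b))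
      Set.Ioc_subset_Icc_self) hUWd_int_loc]
    rw [integral_mul_const, ← intervalIntegral.integral_of_le hab,
      intervalIntegral.integral_eq_sub_of_hasDerivAt (fun t _ => hu t)
        (hU.intervalIntegrable a b)]
  rw [hLHS, hRHS] at hswap
  linarith [hswap]

lemma TF9.tendsto_integral_Ioc {h : ℝ → ℝ} (hh : Integrable h) :
    Tendsto (fun k : ℕ => ∫ x in Ioc (-(k:ℝ)) k, h x) atTop (𝓝 (∫ x, h x)) := by
  have hmain := MeasureTheory.tendsto_integral_of_dominated_convergence (fun x => |h x|)
    (F := fun (k : ℕ) => (Ioc (-(k:ℝ)) k).indicator h) (f := h)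
    (fun k => hh.aestronglyMeasurable.indicator measurableSet_Ioc)
    hh.abs
    (fun k => Eventually.of_forall fun x => by
      rw [Real.norm_eq_abs]
      by_cases hx : x ∈ Ioc (-(k:ℝ)) k <;> simp [Set.indicator_apply, hx, abs_nonneg])
    (Eventually.of_forall fun x => by
      have : ∀ᶠ k : ℕ in atTop, x ∈ Ioc (-(k:ℝ)) k := by
        filter_upwards [eventually_gt_atTop ⌈|x|⌉₊] with k hk
        have h1 : |x| ≤ (⌈|x|⌉₊ : ℝ) := Nat.le_ceil _
        have h2 : ((⌈|x|⌉₊:ℕ):ℝ) < (k:ℝ) := by exact_mod_cast hk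
        have := abs_le.1 h1
        constructor <;> [linarith; linarith]
      refine Tendsto.congr' ?_ tendsto_const_nhds
      filter_upwards [this] with k hk
      rw [Set.indicator_of_mem hk])
  refine hmain.congr fun k => ?_
  rw [integral_indicator measurableSet_Ioc]

lemma TF9.ibp {d U u : ℝ → ℝ} (hd : Integrable d)
    (hd0 : (∫ x, d x) = 0)
    (hU : Continuous U) (hu : ∀ x, HasDerivAt u (U x) x)
    {C : ℝ} (huC : ∀ x, |u x| ≤ C)
    (hUW : Integrable (fun x => U x * W d x)) :
    (∫ x, u x * d x) = - ∫ x, U x * W d x := by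
  have hu_cont : Continuous u :=
    continuous_iff_continuousAt.2 fun x => (hu x).continuousAt
  have hud_int : Integrable (fun x => u x * d x) := by
    refine hd.bdd_mul (c := C) hu_cont.aestronglyMeasurable (Eventually.of_forall fun x => ?_)
    rw [Real.norm_eq_abs]; exact huC x
  have hC0 : 0 ≤ C := le_trans (abs_nonneg _) (huC 0)
  have hkey : ∀ k : ℕ, ∫ x in Ioc (-(k:ℝ)) k, u x * d x
      = u k * W d k - u (-(k:ℝ)) * W d (-(k:ℝ)) - ∫ t in Ioc (-(k:ℝ)) k, U t * W d t :=
    fun k => TF9.ibp_finite hd hU hu huC _ _ (by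
      have : (0:ℝ) ≤ (k:ℝ) := Nat.cast_nonneg k
      linarith)
  have hWd_top : Tendsto (fun k : ℕ => W d k) atTop (𝓝 0) := by
    have := TF9.W_tendsto_top hd; rwa [hd0] at this
  have hWd_bot : Tendsto (fun k : ℕ => W d (-(k:ℝ))) atTop (𝓝 0) := TF9.W_tendsto_bot hd
  have hb1 : Tendsto (fun k : ℕ => u k * W d k) atTop (𝓝 0) := by
    apply squeeze_zero_norm (fun k => ?_) (by simpa using hWd_top.abs.const_mul C)
    rw [Real.norm_eq_abs, abs_mul]
    exact mul_le_mul_of_nonneg_right (huC _) (abs_nonneg _)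
  have hb2 : Tendsto (fun k : ℕ => u (-(k:ℝ)) * W d (-(k:ℝ))) atTop (𝓝 0) := by
    apply squeeze_zero_norm (fun k => ?_) (by simpa using hWd_bot.abs.const_mul C)
    rw [Real.norm_eq_abs, abs_mul]
    exact mul_le_mul_of_nonneg_right (huC _) (abs_nonneg _)
  have hL : Tendsto (fun k : ℕ => ∫ x in Ioc (-(k:ℝ)) k, u x * d x) atTop
      (𝓝 (∫ x, u x * d x)) := TF9.tendsto_integral_Ioc hud_int
  have hR : Tendsto (fun k : ℕ => u k * W d k - u (-(k:ℝ)) * W d (-(k:ℝ))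
      - ∫ t in Ioc (-(k:ℝ)) k, U t * W d t) atTop (𝓝 (0 - 0 - ∫ t, U t * W d t)) :=
    (hb1.sub hb2).sub (TF9.tendsto_integral_Ioc hUW)
  have := tendsto_nhds_unique (hL.congr fun k => hkey k) hR
  rw [this]; ring

/-! ### Hölder-type facts -/

lemma TF9.L2mul {F G : ℝ → ℝ} (hF : MemLp F 2 (volume : Measure ℝ))
    (hG : MemLp G 2 (volume : Measure ℝ)) : Integrable (fun x => F x * G x) := by
  have : HolderTriple (2:ℝ≥0∞) 2 1 := ⟨by rw [inv_one, ← two_mul, ENNReal.mul_inv_cancel] <;> norm_num⟩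
  have h := hG.smul (φ := F) hF (r := 1)
  rw [memLp_one_iff_integrable] at h
  exact h

lemma TF9.mem_L52 {ρ : ℝ → ℝ} (hρ : MemLp ρ (5/3) (volume : Measure ℝ))
    (hρpos : ∀ᵐ x, 0 ≤ ρ x) :
    MemLp (fun x => ρ x ^ ((2:ℝ)/3)) (5/2) (volume : Measure ℝ) := by
  have h := hρ.norm_rpow_div (2/3)
  have he : ((5:ℝ≥0∞)/3)/((2:ℝ≥0∞)/3) = 5/2 := by
    rw [div_eq_mul_inv (5:ℝ≥0∞) 3, div_eq_mul_inv (2:ℝ≥0∞) 3,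
      div_eq_mul_inv (5*(3:ℝ≥0∞)⁻¹) _,
      ENNReal.mul_inv (Or.inl (by norm_num)) (Or.inl (by norm_num)), inv_inv]
    calc (5:ℝ≥0∞) * 3⁻¹ * (2⁻¹ * 3) = (5 * 2⁻¹) * (3⁻¹ * 3) := by ring
      _ = 5/2 := by rw [ENNReal.inv_mul_cancel (by norm_num) (by norm_num)]
                    rw [mul_one, div_eq_mul_inv]
  have ht : ((2:ℝ≥0∞)/3).toReal = (2:ℝ)/3 := by norm_num [ENNReal.toReal_div]
  rw [he, ht] at h
  refine h.ae_eq ?_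
  filter_upwards [hρpos] with x hx
  rw [Real.norm_eq_abs, abs_of_nonneg hx]

lemma TF9.holder_53 {ρ σ : ℝ → ℝ} (hρ : MemLp ρ (5/3) (volume : Measure ℝ))
    (hρpos : ∀ᵐ x, 0 ≤ ρ x) (hσ : MemLp σ (5/3) (volume : Measure ℝ)) :
    Integrable (fun x => ρ x ^ ((2:ℝ)/3) * σ x) := by
  have : ENNReal.HolderTriple ((5:ℝ≥0∞)/2) ((5:ℝ≥0∞)/3) 1 := ⟨by
      rw [ENNReal.inv_div (Or.inl (by norm_num)) (Or.inl (by norm_num)),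
        ENNReal.inv_div (Or.inl (by norm_num)) (Or.inl (by norm_num)),
        ENNReal.div_add_div_same]
      norm_num
      rw [ENNReal.div_self] <;> norm_num⟩
  have h := hσ.smul (φ := fun x => ρ x ^ ((2:ℝ)/3)) (TF9.mem_L52 hρ hρpos) (r := 1)
  rw [memLp_one_iff_integrable] at h
  exact h

lemma TF9.int_rpow53 {ρ : ℝ → ℝ} (hρ : MemLp ρ (5/3) (volume : Measure ℝ))
    (hρpos : ∀ᵐ x, 0 ≤ ρ x) :
    Integrable (fun x => ρ x ^ ((5:ℝ)/3)) := by
  have h := hρ.integrable_norm_rpow (by norm_num) (by norm_num [ENNReal.div_eq_top])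
  have ht : ((5:ℝ≥0∞)/3).toReal = (5:ℝ)/3 := by norm_num [ENNReal.toReal_div]
  rw [ht] at h
  refine h.congr ?_
  filter_upwards [hρpos] with x hx
  rw [Real.norm_eq_abs, abs_of_nonneg hx]

lemma TF9.rpow_mul_self {a : ℝ} (ha : 0 ≤ a) : a ^ ((2:ℝ)/3) * a = a ^ ((5:ℝ)/3) := by
  rcases eq_or_lt_of_le ha with h | h
  · rw [← h]
    rw [Real.zero_rpow (by norm_num), Real.zero_rpow (by norm_num), zero_mul]
  · have : a ^ ((5:ℝ)/3) = a ^ ((2:ℝ)/3 + 1) := by norm_num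
    rw [this, Real.rpow_add h, Real.rpow_one]

lemma TF9.convexity_ineq {a b : ℝ} (ha : 0 ≤ a) (hb : 0 ≤ b) :
    (5/3) * a ^ ((2:ℝ)/3) * (b - a) ≤ b ^ ((5:ℝ)/3) - a ^ ((5:ℝ)/3) := by
  rcases eq_or_lt_of_le ha with h | h
  · rw [← h]
    rw [Real.zero_rpow (by norm_num), Real.zero_rpow (by norm_num)]
    simpa using Real.rpow_nonneg hb _
  · have hx : (-1:ℝ) ≤ b/a - 1 := by
      have : 0 ≤ b/a := div_nonneg hb h.le
      linarith
    have hber := one_add_mul_self_le_rpow_one_add hx (by norm_num : (1:ℝ) ≤ 5/3)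
    have h1 : (1 + (b/a - 1)) = b/a := by ring
    rw [h1] at hber
    have ha53 : (0:ℝ) < a ^ ((5:ℝ)/3) := Real.rpow_pos_of_pos h _
    have hmul := mul_le_mul_of_nonneg_left hber ha53.le
    have hdiv : (b/a) ^ ((5:ℝ)/3) = b ^ ((5:ℝ)/3) / a ^ ((5:ℝ)/3) :=
      Real.div_rpow hb h.le _
    rw [hdiv] at hmul
    have hr : a ^ ((5:ℝ)/3) * (b ^ ((5:ℝ)/3) / a ^ ((5:ℝ)/3)) = b ^ ((5:ℝ)/3) := by
      field_simp
    rw [hr] at hmul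
    have hexp : a ^ ((5:ℝ)/3) * (1 + 5/3 * (b/a - 1))
        = a ^ ((5:ℝ)/3) + 5/3 * a ^ ((2:ℝ)/3) * (b - a) := by
      have h2 : a ^ ((5:ℝ)/3) = a ^ ((2:ℝ)/3) * a := (TF9.rpow_mul_self h.le).symm
      rw [h2]
      field_simp
    rw [hexp] at hmul
    linarith

/-- Converse: if `ρ ∈ A(μ)` satisfies the Thomas–Fermi equation for some Fermi level `λ`,
then `ρ` is a minimizer of `E^TF` over `A(μ)`. -/
theorem stmt9 (μ ρ : ℝ → ℝ) (hμ : Integrable μ) (hμpos : ∀ᵐ x, 0 ≤ μ x)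
    (hZ : 0 < ∫ x, μ x) (hadm : Adm μ ρ) (lam : ℝ)
    (hEL : ∀ᵐ x, (5 / 3) * cTF * ρ x ^ ((2 : ℝ) / 3)
      = max 0 (lam - Phi (fun y => ρ y - μ y) x)) :
    ∀ σ, Adm μ σ → Etf μ ρ ≤ Etf μ σ := by
  intro σ hσadm
  obtain ⟨hρint, hρ53, hρpos, hWf2, hρZ⟩ := hadm
  obtain ⟨hσint, hσ53, hσpos, hWg2, hσZ⟩ := hσadm
  set f : ℝ → ℝ := fun y => ρ y - μ y with hf_def
  set g : ℝ → ℝ := fun y => σ y - μ y with hg_def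
  have hf : Integrable f := hρint.sub hμ
  have hg : Integrable g := hσint.sub hμ
  set d : ℝ → ℝ := fun y => σ y - ρ y with hd_def
  have hd : Integrable d := hσint.sub hρint
  have hd0 : (∫ x, d x) = 0 := by
    have h1 : (∫ x, d x) = (∫ x, σ x) - ∫ x, ρ x := integral_sub hσint hρint
    rw [h1, hσZ, hρZ]; ring
  have hWd_eq : ∀ x, W d x = W g x - W f x := by
    intro x
    have h1 : W (fun y => g y - f y) x = W g x - W f x := TF9.W_sub hg hf x
    rw [← h1]
    congr 1
    rw [hd_def, hf_def, hg_def]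
    funext y
    ring
  have hWd2 : MemLp (W d) 2 (volume : Measure ℝ) := by
    refine (hWg2.sub hWf2).ae_eq ?_
    exact Eventually.of_forall fun x => by
      simp only [Pi.sub_apply]
      exact (hWd_eq x).symm
  have hWf_cont : Continuous (W f) := TF9.W_cont hf
  have hWd_cont : Continuous (W d) := TF9.W_cont hd
  -- Phi is differentiable with derivative -4π W f
  have hPhi : ∀ x, HasDerivAt (Phi f) (-4*π*W f x) x := by
    intro x
    have h := (hWf_cont.integral_hasStrictDerivAt 0 x).hasDerivAt.const_mul (-4*π)
    have h2 : Phi f = fun u => -4 * π * ∫ y in (0:ℝ)..u, W f y := rfl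
    rw [h2]
    convert h using 2 <;> ring
  have hPhi_cont : Continuous (Phi f) :=
    continuous_iff_continuousAt.2 fun x => (hPhi x).continuousAt
  -- products of L² functions
  have hR_int : Integrable (fun x => W f x * W d x) := TF9.L2mul hWf2 hWd2
  have hRabs_int : Integrable (fun x => 4*π*|W f x * W d x|) := hR_int.abs.const_mul _
  have hS_meas : MeasurableSet {x : ℝ | Phi f x < lam} :=
    measurableSet_lt hPhi_cont.measurable measurable_const
  have hSC_meas : MeasurableSet {x : ℝ | lam ≤ Phi f x} :=
    measurableSet_le measurable_const hPhi_cont.measurable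
  set R4 : ℝ → ℝ := fun x => 4*π*(W f x * W d x) with hR4_def
  have hR4_int : Integrable R4 := hR_int.const_mul _
  have hR4_cont : Continuous R4 := continuous_const.mul (hWf_cont.mul hWd_cont)
  have hR4S_int : Integrable ({x : ℝ | Phi f x < lam}.indicator R4) :=
    hR4_int.indicator hS_meas
  have hR4SC_int : Integrable ({x : ℝ | lam ≤ Phi f x}.indicator R4) :=
    hR4_int.indicator hSC_meas
  have hR4_bound : ∀ c : ℝ, 0 ≤ c → c ≤ 1 → ∀ x : ℝ, |c * R4 x| ≤ 4*π*|W f x * W d x| := by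
    intro c hc0 hc1 x
    rw [abs_mul, hR4_def]
    calc |c| * |4*π*(W f x * W d x)| ≤ 1 * |4*π*(W f x * W d x)| := by
          apply mul_le_mul_of_nonneg_right _ (abs_nonneg _)
          rw [abs_of_nonneg hc0]; exact hc1
      _ = 4*π*|W f x * W d x| := by
          rw [one_mul, abs_mul, abs_of_nonneg (by positivity : (0:ℝ) ≤ 4*π)]
  -- derivative of x ↦ lam - Phi f x
  have hv : ∀ x, HasDerivAt (fun x => lam - Phi f x) (4*π*W f x) x := by
    intro x
    have h := (hasDerivAt_const x lam).sub (hPhi x)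
    rw [show (4*π*W f x) = 0 - -4*π*W f x by ring]
    exact h
  have hvB : ∀ x, HasDerivAt (fun x => Phi f x - lam) (-4*π*W f x) x :=
    fun x => (hPhi x).sub_const lam
  have hΘA_cont : ∀ m : ℕ, Continuous (TF9.Theta (TF9.phiA m)) := fun m =>
    continuous_iff_continuousAt.2 fun t =>
      (TF9.Theta_hasDerivAt (TF9.phiA_cont m) t).continuousAt
  have hΘB_cont : ∀ m : ℕ, Continuous (TF9.Theta (TF9.phiB m)) := fun m =>
    continuous_iff_continuousAt.2 fun t =>
      (TF9.Theta_hasDerivAt (TF9.phiB_cont m) t).continuousAt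
  ------------------------------------------------------------------
  -- Part (A): integration by parts identity for each m
  ------------------------------------------------------------------
  have hAm : ∀ m : ℕ, (∫ x, TF9.Theta (TF9.phiA m) (lam - Phi f x) * d x)
      = - ∫ x, (TF9.phiA m (lam - Phi f x) * (4*π*W f x)) * W d x := by
    intro m
    have hU_cont : Continuous (fun x => TF9.phiA m (lam - Phi f x) * (4*π*W f x)) :=
      ((TF9.phiA_cont m).comp (continuous_const.sub hPhi_cont)).mul
        (continuous_const.mul hWf_cont)
    have hu_der : ∀ x, HasDerivAt (fun x => TF9.Theta (TF9.phiA m) (lam - Phi f x))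
        (TF9.phiA m (lam - Phi f x) * (4*π*W f x)) x := fun x =>
      (TF9.Theta_hasDerivAt (TF9.phiA_cont m) _).comp x (hv x)
    have huC : ∀ x, |TF9.Theta (TF9.phiA m) (lam - Phi f x)| ≤ ((m:ℝ)+2) + 1 := fun x =>
      TF9.Theta_abs_le (TF9.phiA_cont m) (TF9.phiA_nonneg m) (TF9.phiA_le_one m)
        (by positivity) (fun s hs => TF9.phiA_zero_ge m hs)
        (fun s hs => TF9.phiA_zero_nonpos m (by linarith)) _
    have hUW : Integrable (fun x => (TF9.phiA m (lam - Phi f x) * (4*π*W f x)) * W d x) := by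
      refine hRabs_int.mono' (hU_cont.mul hWd_cont).aestronglyMeasurable
        (Eventually.of_forall fun x => ?_)
      have h1 : (TF9.phiA m (lam - Phi f x) * (4*π*W f x)) * W d x
          = TF9.phiA m (lam - Phi f x) * R4 x := by rw [hR4_def]; ring
      rw [Real.norm_eq_abs, h1]
      exact hR4_bound _ (TF9.phiA_nonneg m _) (TF9.phiA_le_one m _) x
    exact TF9.ibp hd hd0 hU_cont hu_der huC hUW
  ------------------------------------------------------------------
  -- integrable majorant for the (A) left-hand sides
  ------------------------------------------------------------------
  have hb1_int : Integrable (fun x => ρ x ^ ((2:ℝ)/3) * σ x) := TF9.holder_53 hρ53 hρpos hσ53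
  have hb2_int : Integrable (fun x => ρ x ^ ((2:ℝ)/3) * ρ x) := TF9.holder_53 hρ53 hρpos hρ53
  have hcTF_pos : (0:ℝ) < cTF := by
    unfold cTF
    positivity
  have hρ23_meas : AEStronglyMeasurable (fun x => ρ x ^ ((2:ℝ)/3)) volume :=
    (TF9.mem_L52 hρ53 hρpos).1
  have hbound_int : Integrable (fun x => (5/3)*cTF*(ρ x ^ ((2:ℝ)/3) * |d x|)) := by
    refine ((hb1_int.add hb2_int).const_mul ((5:ℝ)/3*cTF)).mono'
      ((hρ23_meas.mul hd.abs.aestronglyMeasurable).const_mul _) ?_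
    filter_upwards [hρpos, hσpos] with x h1 h2
    have h3 : 0 ≤ ρ x ^ ((2:ℝ)/3) := Real.rpow_nonneg h1 _
    have h4 : |d x| ≤ σ x + ρ x := by
      rw [hd_def]
      calc |σ x - ρ x| ≤ |σ x| + |ρ x| := abs_sub _ _
        _ = σ x + ρ x := by rw [abs_of_nonneg h2, abs_of_nonneg h1]
    rw [Real.norm_eq_abs, abs_of_nonneg (by positivity)]
    have h5 : ρ x ^ ((2:ℝ)/3) * |d x| ≤ ρ x ^ ((2:ℝ)/3) * (σ x + ρ x) :=
      mul_le_mul_of_nonneg_left h4 h3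
    calc (5/3)*cTF*(ρ x ^ ((2:ℝ)/3) * |d x|)
        ≤ (5/3)*cTF*(ρ x ^ ((2:ℝ)/3) * (σ x + ρ x)) := by nlinarith
      _ = 5/3*cTF*(ρ x ^ ((2:ℝ)/3) * σ x + ρ x ^ ((2:ℝ)/3) * ρ x) := by ring
  ------------------------------------------------------------------
  -- limits in (A)
  ------------------------------------------------------------------
  have hlimA_L : Tendsto (fun m : ℕ => ∫ x, TF9.Theta (TF9.phiA m) (lam - Phi f x) * d x)
      atTop (𝓝 (∫ x, max 0 (lam - Phi f x) * d x)) := by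
    refine MeasureTheory.tendsto_integral_of_dominated_convergence
      (fun x => (5/3)*cTF*(ρ x ^ ((2:ℝ)/3) * |d x|))
      (fun m => (((hΘA_cont m).comp (continuous_const.sub hPhi_cont)).aestronglyMeasurable.mul
        hd.aestronglyMeasurable)) hbound_int ?_ ?_
    · intro m
      filter_upwards [hEL] with x hx
      have h0 : 0 ≤ TF9.Theta (TF9.phiA m) (lam - Phi f x) := by
        have := TF9.Theta_ge (TF9.phiA_cont m) (TF9.phiA_nonneg m) (TF9.phiA_le_one m)
          (le_refl (0:ℝ)) (fun s hs => TF9.phiA_zero_nonpos m (by linarith)) (lam - Phi f x)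
        linarith
      have h1 : TF9.Theta (TF9.phiA m) (lam - Phi f x) ≤ max (lam - Phi f x) 0 :=
        TF9.Theta_le_max (TF9.phiA_cont m) (TF9.phiA_nonneg m) (TF9.phiA_le_one m) _
      rw [Real.norm_eq_abs, abs_mul, abs_of_nonneg h0]
      calc TF9.Theta (TF9.phiA m) (lam - Phi f x) * |d x|
          ≤ max (lam - Phi f x) 0 * |d x| :=
            mul_le_mul_of_nonneg_right h1 (abs_nonneg _)
        _ = (5/3)*cTF*(ρ x ^ ((2:ℝ)/3) * |d x|) := by
            rw [max_comm, ← hx]; ring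
    · refine Eventually.of_forall fun x => ?_
      have h := (TF9.ThetaA_tendsto (lam - Phi f x)).mul_const (d x)
      rwa [max_comm] at h
  have hlimA_R : Tendsto
      (fun m : ℕ => ∫ x, (TF9.phiA m (lam - Phi f x) * (4*π*W f x)) * W d x)
      atTop (𝓝 (∫ x, ({x : ℝ | Phi f x < lam}).indicator R4 x)) := by
    refine MeasureTheory.tendsto_integral_of_dominated_convergence
      (fun x => 4*π*|W f x * W d x|)
      (fun m => ((((TF9.phiA_cont m).comp (continuous_const.sub hPhi_cont)).mul
        (continuous_const.mul hWf_cont)).mul hWd_cont).aestronglyMeasurable)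
      hRabs_int ?_ ?_
    · intro m
      refine Eventually.of_forall fun x => ?_
      have h1 : (TF9.phiA m (lam - Phi f x) * (4*π*W f x)) * W d x
          = TF9.phiA m (lam - Phi f x) * R4 x := by rw [hR4_def]; ring
      rw [Real.norm_eq_abs, h1]
      exact hR4_bound _ (TF9.phiA_nonneg m _) (TF9.phiA_le_one m _) x
    · refine Eventually.of_forall fun x => ?_
      have h := (TF9.phiA_tendsto (lam - Phi f x)).mul_const (R4 x)
      have he : (if 0 < lam - Phi f x then (1:ℝ) else 0) * R4 x
          = ({x : ℝ | Phi f x < lam}).indicator R4 x := by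
        rw [Set.indicator_apply]
        by_cases hx : Phi f x < lam
        · rw [if_pos (sub_pos.2 hx), if_pos (by exact hx), one_mul]
        · rw [if_neg (fun hc => hx (sub_pos.1 hc)), if_neg (by exact hx), zero_mul]
      rw [he] at h
      refine h.congr fun m => ?_
      rw [hR4_def]; ring
  have hA : (∫ x, max 0 (lam - Phi f x) * d x)
      = - ∫ x, ({x : ℝ | Phi f x < lam}).indicator R4 x := by
    have h2 : Tendsto (fun m : ℕ => ∫ x, TF9.Theta (TF9.phiA m) (lam - Phi f x) * d x)
        atTop (𝓝 (- ∫ x, ({x : ℝ | Phi f x < lam}).indicator R4 x)) :=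
      (hlimA_R.neg).congr fun m => (hAm m).symm
    exact tendsto_nhds_unique hlimA_L h2
  ------------------------------------------------------------------
  -- Part (B)
  ------------------------------------------------------------------
  have hBm : ∀ m : ℕ, -(1/((m:ℝ)+1)) * (∫ x, σ x)
      ≤ ∫ x, TF9.phiB m (Phi f x - lam) * R4 x := by
    intro m
    have hm1 : (0:ℝ) < (m:ℝ)+1 := by positivity
    have hphiBneg1 : ∀ s : ℝ, s ≤ -1 → TF9.phiB m s = 0 := by
      intro s hs
      apply TF9.phiB_zero_le m
      have h1 : 1/((m:ℝ)+1) ≤ 1 := by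
        rw [div_le_one hm1]
        linarith [Nat.cast_nonneg (α := ℝ) m]
      linarith
    have hU_cont : Continuous (fun x => TF9.phiB m (Phi f x - lam) * (-4*π*W f x)) :=
      ((TF9.phiB_cont m).comp (hPhi_cont.sub continuous_const)).mul
        (continuous_const.mul hWf_cont)
    have hu_der : ∀ x, HasDerivAt (fun x => TF9.Theta (TF9.phiB m) (Phi f x - lam))
        (TF9.phiB m (Phi f x - lam) * (-4*π*W f x)) x := fun x =>
      (TF9.Theta_hasDerivAt (TF9.phiB_cont m) _).comp x (hvB x)
    have huC : ∀ x, |TF9.Theta (TF9.phiB m) (Phi f x - lam)| ≤ ((m:ℝ)+2) + 1 := fun x =>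
      TF9.Theta_abs_le (TF9.phiB_cont m) (TF9.phiB_nonneg m) (TF9.phiB_le_one m)
        (by positivity) (fun s hs => TF9.phiB_zero_ge m hs) hphiBneg1 _
    have hΘB_bdd : ∀ x, ‖TF9.Theta (TF9.phiB m) (Phi f x - lam)‖ ≤ ((m:ℝ)+2) + 1 := by
      intro x; rw [Real.norm_eq_abs]; exact huC x
    have hUW : Integrable (fun x => (TF9.phiB m (Phi f x - lam) * (-4*π*W f x)) * W d x) := by
      refine hRabs_int.mono' (hU_cont.mul hWd_cont).aestronglyMeasurable
        (Eventually.of_forall fun x => ?_)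
      have h1 : (TF9.phiB m (Phi f x - lam) * (-4*π*W f x)) * W d x
          = -(TF9.phiB m (Phi f x - lam) * R4 x) := by rw [hR4_def]; ring
      rw [Real.norm_eq_abs, h1, abs_neg]
      exact hR4_bound _ (TF9.phiB_nonneg m _) (TF9.phiB_le_one m _) x
    have hibp := TF9.ibp hd hd0 hU_cont hu_der huC hUW
    -- rewrite right-hand side
    have heq : - ∫ x, (TF9.phiB m (Phi f x - lam) * (-4*π*W f x)) * W d x
        = ∫ x, TF9.phiB m (Phi f x - lam) * R4 x := by
      rw [← integral_neg]
      refine integral_congr_ae (Eventually.of_forall fun x => ?_)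
      rw [hR4_def]; ring
    -- lower bound on the left-hand side
    have hmeasΘ : AEStronglyMeasurable (fun x => TF9.Theta (TF9.phiB m) (Phi f x - lam))
        volume := ((hΘB_cont m).comp (hPhi_cont.sub continuous_const)).aestronglyMeasurable
    have hint1 : Integrable (fun x => TF9.Theta (TF9.phiB m) (Phi f x - lam) * σ x) :=
      hσint.bdd_mul hmeasΘ (Eventually.of_forall hΘB_bdd)
    have hint2 : Integrable (fun x => TF9.Theta (TF9.phiB m) (Phi f x - lam) * ρ x) :=
      hρint.bdd_mul hmeasΘ (Eventually.of_forall hΘB_bdd)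
    have hsplit : (∫ x, TF9.Theta (TF9.phiB m) (Phi f x - lam) * d x)
        = (∫ x, TF9.Theta (TF9.phiB m) (Phi f x - lam) * σ x)
          - ∫ x, TF9.Theta (TF9.phiB m) (Phi f x - lam) * ρ x := by
      rw [← integral_sub hint1 hint2]
      refine integral_congr_ae (Eventually.of_forall fun x => ?_)
      rw [hd_def]; ring
    have hρ_term : (∫ x, TF9.Theta (TF9.phiB m) (Phi f x - lam) * ρ x) ≤ 0 := by
      apply integral_nonpos_of_ae
      filter_upwards [hρpos, hEL] with x h1 h2
      simp only [Pi.zero_apply]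
      rcases eq_or_lt_of_le h1 with h3 | h3
      · rw [← h3, mul_zero]
      · have h4 : 0 < (5/3) * cTF * ρ x ^ ((2:ℝ)/3) := by
          have := Real.rpow_pos_of_pos h3 ((2:ℝ)/3)
          positivity
        rw [h2] at h4
        have h5 : 0 < lam - Phi f x := by
          by_contra h6
          push_neg at h6
          rw [max_eq_left h6] at h4
          exact lt_irrefl _ h4
        have h7 : TF9.Theta (TF9.phiB m) (Phi f x - lam) ≤ 0 :=
          TF9.Theta_nonpos (TF9.phiB_nonneg m) (by linarith)
        exact mul_nonpos_of_nonpos_of_nonneg h7 h1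
    have hσ_term : -(1/((m:ℝ)+1)) * (∫ x, σ x)
        ≤ ∫ x, TF9.Theta (TF9.phiB m) (Phi f x - lam) * σ x := by
      rw [← integral_const_mul]
      refine integral_mono_ae (hσint.const_mul _) hint1 ?_
      filter_upwards [hσpos] with x h1
      have h2 : -(1/((m:ℝ)+1)) ≤ TF9.Theta (TF9.phiB m) (Phi f x - lam) :=
        TF9.Theta_ge (TF9.phiB_cont m) (TF9.phiB_nonneg m) (TF9.phiB_le_one m)
          (by positivity) (fun s hs => TF9.phiB_zero_le m hs) _
      exact mul_le_mul_of_nonneg_right h2 h1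
    calc -(1/((m:ℝ)+1)) * (∫ x, σ x)
        ≤ ∫ x, TF9.Theta (TF9.phiB m) (Phi f x - lam) * σ x := hσ_term
      _ ≤ (∫ x, TF9.Theta (TF9.phiB m) (Phi f x - lam) * σ x)
          - ∫ x, TF9.Theta (TF9.phiB m) (Phi f x - lam) * ρ x := by linarith
      _ = ∫ x, TF9.Theta (TF9.phiB m) (Phi f x - lam) * d x := hsplit.symm
      _ = - ∫ x, (TF9.phiB m (Phi f x - lam) * (-4*π*W f x)) * W d x := hibp
      _ = ∫ x, TF9.phiB m (Phi f x - lam) * R4 x := heq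
  have hlimB : Tendsto (fun m : ℕ => ∫ x, TF9.phiB m (Phi f x - lam) * R4 x)
      atTop (𝓝 (∫ x, ({x : ℝ | lam ≤ Phi f x}).indicator R4 x)) := by
    refine MeasureTheory.tendsto_integral_of_dominated_convergence
      (fun x => 4*π*|W f x * W d x|)
      (fun m => (((TF9.phiB_cont m).comp (hPhi_cont.sub continuous_const)).mul
        hR4_cont).aestronglyMeasurable) hRabs_int ?_ ?_
    · intro m
      refine Eventually.of_forall fun x => ?_
      rw [Real.norm_eq_abs]
      exact hR4_bound _ (TF9.phiB_nonneg m _) (TF9.phiB_le_one m _) x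
    · refine Eventually.of_forall fun x => ?_
      have h := (TF9.phiB_tendsto (Phi f x - lam)).mul_const (R4 x)
      have he : (if 0 ≤ Phi f x - lam then (1:ℝ) else 0) * R4 x
          = ({x : ℝ | lam ≤ Phi f x}).indicator R4 x := by
        rw [Set.indicator_apply]
        by_cases hx : lam ≤ Phi f x
        · rw [if_pos (by linarith : (0:ℝ) ≤ Phi f x - lam), if_pos (by exact hx), one_mul]
        · rw [if_neg (fun hc => hx (by linarith)), if_neg (by exact hx), zero_mul]
      rwa [he] at h
  have hBlow : Tendsto (fun m : ℕ => -(1/((m:ℝ)+1)) * (∫ x, σ x)) atTop (𝓝 0) := by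
    have h := tendsto_one_div_add_atTop_nhds_zero_nat (𝕜 := ℝ)
    have h2 := (h.neg).mul_const (∫ x, σ x)
    simpa using h2
  have hB : 0 ≤ ∫ x, ({x : ℝ | lam ≤ Phi f x}).indicator R4 x :=
    le_of_tendsto_of_tendsto' hBlow hlimB hBm
  ------------------------------------------------------------------
  -- convexity inequality for the kinetic term
  ------------------------------------------------------------------
  have hσ53_int := TF9.int_rpow53 hσ53 hσpos
  have hρ53_int := TF9.int_rpow53 hρ53 hρpos
  have hWf2_int : Integrable (fun x => (W f x)^2) := hWf2.integrable_sq
  have hWg2_int : Integrable (fun x => (W g x)^2) := hWg2.integrable_sq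
  have hWd2_int : Integrable (fun x => (W d x)^2) := hWd2.integrable_sq
  have hconv_int : Integrable (fun x => (5/3) * ρ x ^ ((2:ℝ)/3) * (σ x - ρ x)) := by
    have h := (hb1_int.sub hb2_int).const_mul ((5:ℝ)/3)
    refine h.congr (Eventually.of_forall fun x => ?_)
    simp only [Pi.sub_apply]
    ring
  have hmono1 : (∫ x, (5/3) * ρ x ^ ((2:ℝ)/3) * (σ x - ρ x))
      ≤ ∫ x, (σ x ^ ((5:ℝ)/3) - ρ x ^ ((5:ℝ)/3)) := by
    refine integral_mono_ae hconv_int (hσ53_int.sub hρ53_int) ?_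
    filter_upwards [hρpos, hσpos] with x h1 h2
    exact TF9.convexity_ineq h1 h2
  have hqcd : (∫ x, max 0 (lam - Phi f x) * d x)
      = cTF * ∫ x, (5/3) * ρ x ^ ((2:ℝ)/3) * (σ x - ρ x) := by
    rw [← integral_const_mul]
    refine integral_congr_ae ?_
    filter_upwards [hEL] with x hx
    rw [← hx, hd_def]
    ring
  have hW2 : (∫ x, (W g x)^2) - (∫ x, (W f x)^2)
      = (∫ x, (W d x)^2) + 2 * ∫ x, W f x * W d x := by
    rw [← integral_sub hWg2_int hWf2_int, ← integral_const_mul,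
      ← integral_add hWd2_int (hR_int.const_mul 2)]
    refine integral_congr_ae (Eventually.of_forall fun x => ?_)
    simp only [Pi.sub_apply, Pi.add_apply]
    rw [hWd_eq x]
    ring
  have hWd2_nonneg : 0 ≤ ∫ x, (W d x)^2 := integral_nonneg fun x => sq_nonneg _
  have hsplitR4 : (∫ x, R4 x) - (∫ x, ({x : ℝ | Phi f x < lam}).indicator R4 x)
      = ∫ x, ({x : ℝ | lam ≤ Phi f x}).indicator R4 x := by
    rw [← integral_sub hR4_int hR4S_int]
    refine integral_congr_ae (Eventually.of_forall fun x => ?_)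
    simp only [Pi.sub_apply, Set.indicator_apply, Set.mem_setOf_eq]
    by_cases hx : Phi f x < lam
    · rw [if_pos hx, if_neg (not_le.2 hx)]
      ring
    · rw [if_neg hx, if_pos (not_lt.1 hx)]
      ring
  have hR4_eq : (∫ x, R4 x) = 4*π*∫ x, W f x * W d x := integral_const_mul _ _
  -- the integral of σ^{5/3} minus that of ρ^{5/3}
  have hsub53 : (∫ x, σ x ^ ((5:ℝ)/3)) - (∫ x, ρ x ^ ((5:ℝ)/3))
      = ∫ x, (σ x ^ ((5:ℝ)/3) - ρ x ^ ((5:ℝ)/3)) := (integral_sub hσ53_int hρ53_int).symm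
  -- final assembly
  have hπ : (0:ℝ) < π := Real.pi_pos
  have hEtf_expand : Etf μ σ - Etf μ ρ
      = cTF * ((∫ x, σ x ^ ((5:ℝ)/3)) - (∫ x, ρ x ^ ((5:ℝ)/3)))
        + 2*π*((∫ x, (W g x)^2) - (∫ x, (W f x)^2)) := by
    unfold Etf
    rw [← hf_def, ← hg_def]
    ring
  have hkin : cTF * ((∫ x, σ x ^ ((5:ℝ)/3)) - (∫ x, ρ x ^ ((5:ℝ)/3)))
      ≥ ∫ x, max 0 (lam - Phi f x) * d x := by
    rw [hsub53, hqcd]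
    exact mul_le_mul_of_nonneg_left hmono1 hcTF_pos.le
  have hpot : 2*π*((∫ x, (W g x)^2) - (∫ x, (W f x)^2)) ≥ ∫ x, R4 x := by
    rw [hW2, hR4_eq]
    nlinarith [hWd2_nonneg, hπ]
  have hfinal : Etf μ σ - Etf μ ρ ≥ 0 := by
    have h1 : Etf μ σ - Etf μ ρ ≥ (∫ x, max 0 (lam - Phi f x) * d x) + ∫ x, R4 x := by
      rw [hEtf_expand]; linarith
    rw [hA] at h1
    linarith [hB, hsplitR4]
  linarith
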